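/- Let Φₛ be the general fully symmetric octupolar potential on ℝ³ with parameters α₀,α₁,α₂,α₃,β₁,β₂,β₃,γ₁,γ₂,γ₃ ∈ ℝ: Φₛ(x₁,x₂,x₃) = 6α₀x₁x₂x₃ + α₁x₁³ + α₂x₂³ + α₃x₃³ + 3(β₁x₁x₂² + β₂x₂x₃² + β₃x₃x₁²) + 3(γ₁x₁x₃² + γ₂x₂x₁² + γ₃x₃x₂²), and set Aᵢ = 3(αᵢ + βᵢ + γᵢ) for i = 1,2,3. Consider the tetrahedral points p₁ = (0,0,1), p₂ = (0, 2√2/3, −1/3), p₃ = (−√(2/3), −√2/3, −1/3), p₄ = (√(2/3), −√2/3, −1/3) on the unit sphere. Then all four points p₁,…,p₄ are critical points of Φₛ restricted to S² (i.e., ∇Φₛ(pᵢ) is a scalar multiple of pᵢ for each i) if and only if α₀ = √2·β₁, α₁ = 3β₁, β₂ = 0, A₁ = 12β₁, A₂ = 2α₂ + (1/√2)α₃ + 3√2·β₃, and A₃ = −√2·α₂ + (5/2)α₃ + 3β₃. -/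

import Mathlib

/-- The general fully symmetric octupolar potential with its ten parameters. -/
noncomputable def symPot (α₀ α₁ α₂ α₃ β₁ β₂ β₃ γ₁ γ₂ γ₃ : ℝ)
    (x : EuclideanSpace ℝ (Fin 3)) : ℝ :=
  6 * α₀ * x 0 * x 1 * x 2
    + α₁ * (x 0) ^ 3 + α₂ * (x 1) ^ 3 + α₃ * (x 2) ^ 3
    + 3 * (β₁ * x 0 * (x 1) ^ 2 + β₂ * x 1 * (x 2) ^ 2 + β₃ * x 2 * (x 0) ^ 2)
    + 3 * (γ₁ * x 0 * (x 2) ^ 2 + γ₂ * x 1 * (x 0) ^ 2 + γ₃ * x 2 * (x 1) ^ 2)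

/-- The vertices of the regular tetrahedron inscribed in the unit sphere. -/
noncomputable def tetraPt : Fin 4 → EuclideanSpace ℝ (Fin 3)
  | 0 => (WithLp.equiv 2 (Fin 3 → ℝ)).symm ![0, 0, 1]
  | 1 => (WithLp.equiv 2 (Fin 3 → ℝ)).symm ![0, 2 * Real.sqrt 2 / 3, -(1/3)]
  | 2 => (WithLp.equiv 2 (Fin 3 → ℝ)).symm
      ![-Real.sqrt (2/3), -(Real.sqrt 2 / 3), -(1/3)]
  | 3 => (WithLp.equiv 2 (Fin 3 → ℝ)).symm
      ![Real.sqrt (2/3), -(Real.sqrt 2 / 3), -(1/3)]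

lemma symPot_grad (α₀ α₁ α₂ α₃ β₁ β₂ β₃ γ₁ γ₂ γ₃ : ℝ) (x : EuclideanSpace ℝ (Fin 3)) :
    gradient (symPot α₀ α₁ α₂ α₃ β₁ β₂ β₃ γ₁ γ₂ γ₃) x
      = (WithLp.equiv 2 (Fin 3 → ℝ)).symm
        ![6*α₀*(x 1)*(x 2) + 3*α₁*(x 0)^2 + 3*β₁*(x 1)^2 + 6*β₃*(x 2)*(x 0)
            + 3*γ₁*(x 2)^2 + 6*γ₂*(x 1)*(x 0),
          6*α₀*(x 0)*(x 2) + 3*α₂*(x 1)^2 + 6*β₁*(x 0)*(x 1) + 3*β₂*(x 2)^2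
            + 3*γ₂*(x 0)^2 + 6*γ₃*(x 2)*(x 1),
          6*α₀*(x 0)*(x 1) + 3*α₃*(x 2)^2 + 6*β₂*(x 1)*(x 2) + 3*β₃*(x 0)^2
            + 6*γ₁*(x 0)*(x 2) + 3*γ₃*(x 1)^2] := by
  have hfe : symPot α₀ α₁ α₂ α₃ β₁ β₂ β₃ γ₁ γ₂ γ₃
      = (fun y : EuclideanSpace ℝ (Fin 3) =>
          6 * α₀ * y 0 * y 1 * y 2 + α₁ * (y 0 * y 0 * y 0) + α₂ * (y 1 * y 1 * y 1)
            + α₃ * (y 2 * y 2 * y 2)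
            + 3 * (β₁ * y 0 * (y 1 * y 1) + β₂ * y 1 * (y 2 * y 2) + β₃ * y 2 * (y 0 * y 0))
            + 3 * (γ₁ * y 0 * (y 2 * y 2) + γ₂ * y 1 * (y 0 * y 0)
                + γ₃ * y 2 * (y 1 * y 1))) := by
    funext y; simp only [symPot]; ring
  rw [hfe]
  apply HasGradientAt.gradient
  rw [hasGradientAt_iff_hasFDerivAt]
  have h0 : HasFDerivAt (fun y : EuclideanSpace ℝ (Fin 3) => y 0)
      (EuclideanSpace.proj 0 : EuclideanSpace ℝ (Fin 3) →L[ℝ] ℝ) x :=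
    (EuclideanSpace.proj (0:Fin 3) : EuclideanSpace ℝ (Fin 3) →L[ℝ] ℝ).hasFDerivAt
  have h1 : HasFDerivAt (fun y : EuclideanSpace ℝ (Fin 3) => y 1)
      (EuclideanSpace.proj 1 : EuclideanSpace ℝ (Fin 3) →L[ℝ] ℝ) x :=
    (EuclideanSpace.proj (1:Fin 3) : EuclideanSpace ℝ (Fin 3) →L[ℝ] ℝ).hasFDerivAt
  have h2 : HasFDerivAt (fun y : EuclideanSpace ℝ (Fin 3) => y 2)
      (EuclideanSpace.proj 2 : EuclideanSpace ℝ (Fin 3) →L[ℝ] ℝ) x :=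
    (EuclideanSpace.proj (2:Fin 3) : EuclideanSpace ℝ (Fin 3) →L[ℝ] ℝ).hasFDerivAt
  have H := ((((((h0.const_mul (6*α₀)).mul h1).mul h2).add
        (((h0.mul h0).mul h0).const_mul α₁)).add
        (((h1.mul h1).mul h1).const_mul α₂)).add
        (((h2.mul h2).mul h2).const_mul α₃)).add
      ((((h0.const_mul β₁).mul (h1.mul h1)).add
          ((h1.const_mul β₂).mul (h2.mul h2)) |>.add
          ((h2.const_mul β₃).mul (h0.mul h0))).const_mul 3) |>.add
      ((((h0.const_mul γ₁).mul (h2.mul h2)).add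
          ((h1.const_mul γ₂).mul (h0.mul h0)) |>.add
          ((h2.const_mul γ₃).mul (h1.mul h1))).const_mul 3)
  convert H using 1
  · rfl
  · rfl
  · funext y; simp only [Pi.mul_apply, Pi.add_apply]
  ext y
  simp only [InnerProductSpace.toDual_apply_apply, PiLp.inner_apply, RCLike.inner_apply,
    starRingEnd_apply, star_trivial, WithLp.equiv_symm_apply, PiLp.toLp_apply, Fin.sum_univ_three,
    Matrix.cons_val_zero, Matrix.cons_val_one, Matrix.head_cons, Matrix.cons_val_two,
    Matrix.tail_cons, ContinuousLinearMap.add_apply, ContinuousLinearMap.smul_apply,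
    PiLp.proj_apply, smul_eq_mul, Pi.mul_apply]
  ring


lemma exists_smul_iff (g0 g1 g2 p0 p1 p2 : ℝ) (hp : p2 ≠ 0) :
    (∃ c : ℝ, ((WithLp.equiv 2 (Fin 3 → ℝ)).symm ![g0, g1, g2] : EuclideanSpace ℝ (Fin 3))
        = c • (WithLp.equiv 2 (Fin 3 → ℝ)).symm ![p0, p1, p2])
      ↔ (g0 * p2 = g2 * p0 ∧ g1 * p2 = g2 * p1) := by
  constructor
  · rintro ⟨c, hc⟩
    have e0 : ((WithLp.equiv 2 (Fin 3 → ℝ)).symm ![g0, g1, g2] : EuclideanSpace ℝ (Fin 3)) 0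
        = (c • (WithLp.equiv 2 (Fin 3 → ℝ)).symm ![p0, p1, p2] : EuclideanSpace ℝ (Fin 3)) 0 := by
      rw [hc]
    have e1 : ((WithLp.equiv 2 (Fin 3 → ℝ)).symm ![g0, g1, g2] : EuclideanSpace ℝ (Fin 3)) 1
        = (c • (WithLp.equiv 2 (Fin 3 → ℝ)).symm ![p0, p1, p2] : EuclideanSpace ℝ (Fin 3)) 1 := by
      rw [hc]
    have e2 : ((WithLp.equiv 2 (Fin 3 → ℝ)).symm ![g0, g1, g2] : EuclideanSpace ℝ (Fin 3)) 2
        = (c • (WithLp.equiv 2 (Fin 3 → ℝ)).symm ![p0, p1, p2] : EuclideanSpace ℝ (Fin 3)) 2 := by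
      rw [hc]
    simp only [WithLp.equiv_symm_apply, PiLp.toLp_apply, Matrix.cons_val_zero, Matrix.cons_val_one, Matrix.head_cons,
    Matrix.cons_val_two, Matrix.tail_cons, PiLp.smul_apply, smul_eq_mul] at e0 e1 e2
    rw [e0, e1, e2]
    constructor <;> ring
  · rintro ⟨e0, e1⟩
    refine ⟨g2 / p2, ?_⟩
    have h : ∀ i : Fin 3,
        ((WithLp.equiv 2 (Fin 3 → ℝ)).symm ![g0, g1, g2] : EuclideanSpace ℝ (Fin 3)) i
        = ((g2 / p2) • (WithLp.equiv 2 (Fin 3 → ℝ)).symm ![p0, p1, p2]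
            : EuclideanSpace ℝ (Fin 3)) i := by
      intro i
      fin_cases i
      · simp only [WithLp.equiv_symm_apply, PiLp.toLp_apply, Matrix.cons_val_zero, Matrix.cons_val_one,
          Matrix.head_cons, Matrix.cons_val_two, Matrix.tail_cons, PiLp.smul_apply, smul_eq_mul,
          Fin.isValue, Fin.zero_eta, Fin.mk_one, Fin.reduceFinMk]
        field_simp
        linear_combination e0
      · simp only [WithLp.equiv_symm_apply, PiLp.toLp_apply, Matrix.cons_val_zero, Matrix.cons_val_one,
          Matrix.head_cons, Matrix.cons_val_two, Matrix.tail_cons, PiLp.smul_apply, smul_eq_mul,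
          Fin.isValue, Fin.zero_eta, Fin.mk_one, Fin.reduceFinMk]
        field_simp
        linear_combination e1
      · simp only [WithLp.equiv_symm_apply, PiLp.toLp_apply, Matrix.cons_val_zero, Matrix.cons_val_one,
          Matrix.head_cons, Matrix.cons_val_two, Matrix.tail_cons, PiLp.smul_apply, smul_eq_mul,
          Fin.isValue, Fin.zero_eta, Fin.mk_one, Fin.reduceFinMk]
        field_simp
    exact PiLp.ext h

theorem stmt18 (α₀ α₁ α₂ α₃ β₁ β₂ β₃ γ₁ γ₂ γ₃ : ℝ) :
    (∀ i : Fin 4, ∃ c : ℝ,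
        gradient (symPot α₀ α₁ α₂ α₃ β₁ β₂ β₃ γ₁ γ₂ γ₃) (tetraPt i)
          = c • tetraPt i)
      ↔ (α₀ = Real.sqrt 2 * β₁ ∧ α₁ = 3 * β₁ ∧ β₂ = 0 ∧
          3 * (α₁ + β₁ + γ₁) = 12 * β₁ ∧
          3 * (α₂ + β₂ + γ₂)
            = 2 * α₂ + (1 / Real.sqrt 2) * α₃ + 3 * Real.sqrt 2 * β₃ ∧
          3 * (α₃ + β₃ + γ₃)
            = -(Real.sqrt 2) * α₂ + (5 / 2) * α₃ + 3 * β₃) := by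
  have hs2 : Real.sqrt 2 * Real.sqrt 2 = 2 := Real.mul_self_sqrt (by norm_num)
  have hr2 : Real.sqrt 3 * Real.sqrt 3 = 3 := Real.mul_self_sqrt (by norm_num)
  have hspos : (0:ℝ) < Real.sqrt 2 := Real.sqrt_pos.mpr (by norm_num)
  have hrpos : (0:ℝ) < Real.sqrt 3 := Real.sqrt_pos.mpr (by norm_num)
  have h23 : Real.sqrt (2/3) = Real.sqrt 2 * Real.sqrt 3 / 3 := by
    rw [Real.sqrt_div (by norm_num : (0:ℝ) ≤ 2) 3,
      div_eq_div_iff hrpos.ne' (by norm_num : (3:ℝ) ≠ 0)]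
    linear_combination (-(Real.sqrt 2)) * hr2
  have h12 : (1:ℝ) / Real.sqrt 2 = Real.sqrt 2 / 2 := by
    rw [div_eq_div_iff hspos.ne' (by norm_num : (2:ℝ) ≠ 0)]
    linear_combination -hs2
  have Gp0 : tetraPt 0 = (WithLp.equiv 2 (Fin 3 → ℝ)).symm ![0, 0, 1] := rfl
  have Gp1 : tetraPt 1
      = (WithLp.equiv 2 (Fin 3 → ℝ)).symm ![0, 2 * Real.sqrt 2 / 3, -(1/3)] := rfl
  have Gp2 : tetraPt 2 = (WithLp.equiv 2 (Fin 3 → ℝ)).symm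
      ![-(Real.sqrt 2 * Real.sqrt 3 / 3), -(Real.sqrt 2 / 3), -(1/3)] := by
    rw [show tetraPt 2 = (WithLp.equiv 2 (Fin 3 → ℝ)).symm
      ![-Real.sqrt (2/3), -(Real.sqrt 2 / 3), -(1/3)] from rfl, h23]
  have Gp3 : tetraPt 3 = (WithLp.equiv 2 (Fin 3 → ℝ)).symm
      ![Real.sqrt 2 * Real.sqrt 3 / 3, -(Real.sqrt 2 / 3), -(1/3)] := by
    rw [show tetraPt 3 = (WithLp.equiv 2 (Fin 3 → ℝ)).symm
      ![Real.sqrt (2/3), -(Real.sqrt 2 / 3), -(1/3)] from rfl, h23]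
  have hone : (1:ℝ) ≠ 0 := one_ne_zero
  have hthird : (-(1/3) : ℝ) ≠ 0 := by norm_num
  rw [h12]
  constructor
  · intro h
    have h0 := h 0; have h1 := h 1; have h2 := h 2; have h3 := h 3
    rw [Gp0, symPot_grad] at h0
    rw [Gp1, symPot_grad] at h1
    rw [Gp2, symPot_grad] at h2
    rw [Gp3, symPot_grad] at h3
    simp only [WithLp.equiv_symm_apply, PiLp.toLp_apply, Matrix.cons_val_zero, Matrix.cons_val_one, Matrix.head_cons,
    Matrix.cons_val_two, Matrix.tail_cons] at h0 h1 h2 h3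
    obtain ⟨E1, E2⟩ := (exists_smul_iff _ _ _ _ _ _ hone).mp h0
    obtain ⟨E3, E4⟩ := (exists_smul_iff _ _ _ _ _ _ hthird).mp h1
    obtain ⟨E5, E6⟩ := (exists_smul_iff _ _ _ _ _ _ hthird).mp h2
    obtain ⟨E7, E8⟩ := (exists_smul_iff _ _ _ _ _ _ hthird).mp h3
    refine ⟨?_, ?_, ?_, ?_, ?_, ?_⟩
    · linear_combination ((1/24)*Real.sqrt 2) * E1 + ((9/8)*Real.sqrt 2) * E3 + (((-1/2))*α₀ + ((1/2)*Real.sqrt 2)*β₁) * hs2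
    · linear_combination ((1/4)) * E1 + ((1/4)*Real.sqrt 3) * E2 + ((9/4)) * E3 + ((-1/4)*Real.sqrt 3) * E4 + ((-3/2)) * E5 + (Real.sqrt 3) * E6 + (((1/9)*Real.sqrt 2*Real.sqrt 3*Real.sqrt 3)*α₀ + ((-1/6)*Real.sqrt 3*Real.sqrt 3)*α₁ + ((5/6) + (2/9)*Real.sqrt 3*Real.sqrt 3)*β₁ + ((1/3)*Real.sqrt 3)*β₂ + ((1/18)*Real.sqrt 2*Real.sqrt 3*Real.sqrt 3*Real.sqrt 3)*β₃ + ((1/9)*Real.sqrt 3*Real.sqrt 3)*γ₁ + ((-1/3)*Real.sqrt 3 + (1/9)*Real.sqrt 3*Real.sqrt 3*Real.sqrt 3)*γ₂ + ((-1/6)*Real.sqrt 2*Real.sqrt 3)*γ₃) * hs2 + (((4/9)*Real.sqrt 2)*α₀ + ((-1/3))*α₁ + ((4/9))*β₁ + ((1/9)*Real.sqrt 2*Real.sqrt 3)*β₃ + ((2/9))*γ₁ + ((2/9)*Real.sqrt 3)*γ₂) * hr2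
    · linear_combination ((1/3)) * E2
    · linear_combination ((7/4)) * E1 + ((3/4)*Real.sqrt 3) * E2 + ((27/4)) * E3 + ((-3/4)*Real.sqrt 3) * E4 + ((-9/2)) * E5 + (3*Real.sqrt 3) * E6 + (((1/3)*Real.sqrt 2*Real.sqrt 3*Real.sqrt 3)*α₀ + ((-1/2)*Real.sqrt 3*Real.sqrt 3)*α₁ + ((5/2) + (2/3)*Real.sqrt 3*Real.sqrt 3)*β₁ + (Real.sqrt 3)*β₂ + ((1/6)*Real.sqrt 2*Real.sqrt 3*Real.sqrt 3*Real.sqrt 3)*β₃ + ((1/3)*Real.sqrt 3*Real.sqrt 3)*γ₁ + ((-1)*Real.sqrt 3 + (1/3)*Real.sqrt 3*Real.sqrt 3*Real.sqrt 3)*γ₂ + ((-1/2)*Real.sqrt 2*Real.sqrt 3)*γ₃) * hs2 + (((4/3)*Real.sqrt 2)*α₀ + ((-1))*α₁ + ((4/3))*β₁ + ((1/3)*Real.sqrt 2*Real.sqrt 3)*β₃ + ((2/3))*γ₁ + ((2/3)*Real.sqrt 3)*γ₂) * hr2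
    · linear_combination ((3/4)*Real.sqrt 3) * E1 + ((3/2)) * E2 + ((9/4)*Real.sqrt 3) * E3 + ((-9/2)) * E6 + ((Real.sqrt 2*Real.sqrt 3)*α₀ + ((-1/2))*α₂ + (1)*β₂ + ((1/2)*Real.sqrt 2*Real.sqrt 3*Real.sqrt 3)*β₃ + (Real.sqrt 3)*γ₁ + ((-1/2)*Real.sqrt 3*Real.sqrt 3)*γ₂ + ((1/2)*Real.sqrt 2)*γ₃) * hs2 + ((Real.sqrt 2)*β₃ + ((-1))*γ₂) * hr2
    · linear_combination ((5/8)*Real.sqrt 2) * E2 + ((-9/8)*Real.sqrt 2) * E4 + (((-1/2)*Real.sqrt 2)*α₂ + ((-1/4))*α₃ + (Real.sqrt 2)*β₂ + ((-3/2) + (-1)*Real.sqrt 2*Real.sqrt 2)*γ₃) * hs2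
  · rintro ⟨H1, H2, H3, H4, H5, H6⟩
    intro i
    fin_cases i
    · show ∃ c : ℝ, gradient (symPot α₀ α₁ α₂ α₃ β₁ β₂ β₃ γ₁ γ₂ γ₃) (tetraPt 0)
          = c • tetraPt 0
      rw [Gp0, symPot_grad]
      simp only [WithLp.equiv_symm_apply, PiLp.toLp_apply, Matrix.cons_val_zero, Matrix.cons_val_one, Matrix.head_cons,
    Matrix.cons_val_two, Matrix.tail_cons]
      refine (exists_smul_iff _ _ _ _ _ _ hone).mpr ⟨?_, ?_⟩
      · linear_combination ((-3)) * H2 + (1) * H4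
      · linear_combination (3) * H3
    · show ∃ c : ℝ, gradient (symPot α₀ α₁ α₂ α₃ β₁ β₂ β₃ γ₁ γ₂ γ₃) (tetraPt 1)
          = c • tetraPt 1
      rw [Gp1, symPot_grad]
      simp only [WithLp.equiv_symm_apply, PiLp.toLp_apply, Matrix.cons_val_zero, Matrix.cons_val_one, Matrix.head_cons,
    Matrix.cons_val_two, Matrix.tail_cons]
      refine (exists_smul_iff _ _ _ _ _ _ hthird).mpr ⟨?_, ?_⟩
      · linear_combination ((4/9)*Real.sqrt 2) * H1 + ((1/9)) * H2 + ((-1/27)) * H4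
      · linear_combination ((5/3)) * H3 + ((-4/9)*Real.sqrt 2) * H6 + (((8/9))*β₂ + ((-8/9)*Real.sqrt 2)*γ₃) * hs2
    · show ∃ c : ℝ, gradient (symPot α₀ α₁ α₂ α₃ β₁ β₂ β₃ γ₁ γ₂ γ₃) (tetraPt 2)
          = c • tetraPt 2
      rw [Gp2, symPot_grad]
      simp only [WithLp.equiv_symm_apply, PiLp.toLp_apply, Matrix.cons_val_zero, Matrix.cons_val_one, Matrix.head_cons,
    Matrix.cons_val_two, Matrix.tail_cons]
      refine (exists_smul_iff _ _ _ _ _ _ hthird).mpr ⟨?_, ?_⟩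
      · linear_combination ((10/9)*Real.sqrt 2) * H1 + ((-17/9)) * H2 + ((8/9)*Real.sqrt 3) * H3 + ((11/27)) * H4 + ((-4/27)*Real.sqrt 3) * H5 + ((2/27)*Real.sqrt 2*Real.sqrt 3) * H6 + (((2/9)*Real.sqrt 2*Real.sqrt 3*Real.sqrt 3)*α₀ + ((-1/9)*Real.sqrt 3*Real.sqrt 3)*α₁ + ((-2/27)*Real.sqrt 3)*α₂ + (1)*β₁ + ((2/9)*Real.sqrt 3)*β₂ + ((1/9)*Real.sqrt 2*Real.sqrt 3*Real.sqrt 3*Real.sqrt 3)*β₃ + ((2/9)*Real.sqrt 3*Real.sqrt 3)*γ₁ + ((-2/9)*Real.sqrt 3)*γ₂ + ((1/9)*Real.sqrt 2*Real.sqrt 3)*γ₃) * hs2 + (((4/9)*Real.sqrt 2)*α₀ + ((-2/9))*α₁ + ((2/9)*Real.sqrt 2*Real.sqrt 3)*β₃ + ((4/9))*γ₁) * hr2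
      · linear_combination ((2/9)*Real.sqrt 2*Real.sqrt 3) * H1 + ((-4/9)*Real.sqrt 3) * H2 + (1) * H3 + ((4/27)*Real.sqrt 3) * H4 + ((-2/9)) * H5 + (((2/9)*Real.sqrt 2*Real.sqrt 3)*α₀ + ((-1/9))*α₂ + ((2/9))*β₂ + ((1/9)*Real.sqrt 2*Real.sqrt 3*Real.sqrt 3)*β₃ + ((2/9)*Real.sqrt 3)*γ₁ + ((-1/9)*Real.sqrt 3*Real.sqrt 3)*γ₂ + ((1/9)*Real.sqrt 2)*γ₃) * hs2 + (((2/9)*Real.sqrt 2)*β₃ + ((-2/9))*γ₂) * hr2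
    · show ∃ c : ℝ, gradient (symPot α₀ α₁ α₂ α₃ β₁ β₂ β₃ γ₁ γ₂ γ₃) (tetraPt 3)
          = c • tetraPt 3
      rw [Gp3, symPot_grad]
      simp only [WithLp.equiv_symm_apply, PiLp.toLp_apply, Matrix.cons_val_zero, Matrix.cons_val_one, Matrix.head_cons,
    Matrix.cons_val_two, Matrix.tail_cons]
      refine (exists_smul_iff _ _ _ _ _ _ hthird).mpr ⟨?_, ?_⟩
      · linear_combination ((10/9)*Real.sqrt 2) * H1 + ((-17/9)) * H2 + ((-8/9)*Real.sqrt 3) * H3 + ((11/27)) * H4 + ((4/27)*Real.sqrt 3) * H5 + ((-2/27)*Real.sqrt 2*Real.sqrt 3) * H6 + (((2/9)*Real.sqrt 2*Real.sqrt 3*Real.sqrt 3)*α₀ + ((-1/9)*Real.sqrt 3*Real.sqrt 3)*α₁ + ((2/27)*Real.sqrt 3)*α₂ + (1)*β₁ + ((-2/9)*Real.sqrt 3)*β₂ + ((-1/9)*Real.sqrt 2*Real.sqrt 3*Real.sqrt 3*Real.sqrt 3)*β₃ + ((2/9)*Real.sqrt 3*Real.sqrt 3)*γ₁ + ((2/9)*Real.sqrt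 3)*γ₂ + ((-1/9)*Real.sqrt 2*Real.sqrt 3)*γ₃) * hs2 + (((4/9)*Real.sqrt 2)*α₀ + ((-2/9))*α₁ + ((-2/9)*Real.sqrt 2*Real.sqrt 3)*β₃ + ((4/9))*γ₁) * hr2
      · linear_combination ((-2/9)*Real.sqrt 2*Real.sqrt 3) * H1 + ((4/9)*Real.sqrt 3) * H2 + (1) * H3 + ((-4/27)*Real.sqrt 3) * H4 + ((-2/9)) * H5 + (((-2/9)*Real.sqrt 2*Real.sqrt 3)*α₀ + ((-1/9))*α₂ + ((2/9))*β₂ + ((1/9)*Real.sqrt 2*Real.sqrt 3*Real.sqrt 3)*β₃ + ((-2/9)*Real.sqrt 3)*γ₁ + ((-1/9)*Real.sqrt 3*Real.sqrt 3)*γ₂ + ((1/9)*Real.sqrt 2)*γ₃) * hs2 + (((2/9)*Real.sqrt 2)*β₃ + ((-2/9))*γ₂) * hr2
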